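/- arXiv:2311.14893 — 4 statements merged into one kernel-verified Lean document; each statement's English description precedes it below -/
import Mathlib

section
/- For a chain complex of finite-dimensional inner product spaces over ℝ or ℂ, each space decomposes orthogonally as C_p = ker(Δ_p) ⊕ Im(d_{p+1}) ⊕ Im(d_p^*), where Δ_p = d_{p+1}d_{p+1}^* + d_p^* d_p is the p-th Laplacian (Hodge decomposition). -/
open LinearMap

/-- The `p`-th (Hodge) Laplacian `Δ_p = d_{p+1} ∘ d_{p+1}^* + d_p^* ∘ d_p` of a chain
complex of finite-dimensional inner product spaces. -/
noncomputable def laplacian {𝕜 : Type} [RCLike 𝕜] {C : ℕ → Type}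
    [∀ n, NormedAddCommGroup (C n)] [∀ n, InnerProductSpace 𝕜 (C n)]
    [∀ n, FiniteDimensional 𝕜 (C n)]
    (d : ∀ n : ℕ, C n →ₗ[𝕜] C (n - 1)) (p : ℕ) : C p →ₗ[𝕜] C p :=
  (d (p + 1) ∘ₗ adjoint (d (p + 1)) : C p →ₗ[𝕜] C p) + adjoint (d p) ∘ₗ d p

section Aux

variable {𝕜 : Type} [RCLike 𝕜] {C : ℕ → Type}
    [∀ n, NormedAddCommGroup (C n)] [∀ n, InnerProductSpace 𝕜 (C n)]
    [∀ n, FiniteDimensional 𝕜 (C n)]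
    (d : ∀ n : ℕ, C n →ₗ[𝕜] C (n - 1)) (p : ℕ)

lemma lap_inner_zero {x : C p} (hx' : (inner 𝕜 ((laplacian d p) x) x : 𝕜) = 0) :
    adjoint (d (p + 1)) x = 0 ∧ d p x = 0 := by
  have h0 : (inner 𝕜 ((adjoint (d (p + 1))) x) ((adjoint (d (p + 1))) x) : 𝕜)
      + inner 𝕜 ((d p) x) ((d p) x) = 0 := by
    calc (inner 𝕜 ((adjoint (d (p + 1))) x) ((adjoint (d (p + 1))) x) : 𝕜)
          + inner 𝕜 ((d p) x) ((d p) x)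
        = inner 𝕜 ((d (p + 1)) ((adjoint (d (p + 1))) x)) x
          + inner 𝕜 ((adjoint (d p)) ((d p) x)) x := by
          rw [adjoint_inner_right, adjoint_inner_left]
      _ = inner 𝕜 ((laplacian d p) x) x := by
          rw [laplacian]
          simp [inner_add_left]
      _ = 0 := hx'
  rw [inner_self_eq_norm_sq_to_K, inner_self_eq_norm_sq_to_K] at h0
  have h1 : (‖adjoint (d (p + 1)) x‖ : ℝ) ^ 2 + ‖d p x‖ ^ 2 = 0 := by
    have h2 := congrArg RCLike.re h0
    rw [← RCLike.ofReal_pow, ← RCLike.ofReal_pow, ← RCLike.ofReal_add, map_zero,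
      RCLike.ofReal_re] at h2
    exact h2
  constructor
  · have : ‖adjoint (d (p + 1)) x‖ = 0 := by
      nlinarith [sq_nonneg ‖adjoint (d (p + 1)) x‖, sq_nonneg ‖d p x‖,
        norm_nonneg (adjoint (d (p + 1)) x), norm_nonneg (d p x)]
    simpa using this
  · have : ‖d p x‖ = 0 := by
      nlinarith [sq_nonneg ‖adjoint (d (p + 1)) x‖, sq_nonneg ‖d p x‖,
        norm_nonneg (adjoint (d (p + 1)) x), norm_nonneg (d p x)]
    simpa using this

lemma mem_ker_lap {x : C p} (hx : x ∈ LinearMap.ker (laplacian d p)) :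
    adjoint (d (p + 1)) x = 0 ∧ d p x = 0 := by
  apply lap_inner_zero
  have hx' : (laplacian d p) x = 0 := hx
  rw [hx']; simp

lemma ker_lap_of_parts {x : C p} (h1 : adjoint (d (p + 1)) x = 0) (h2 : d p x = 0) :
    x ∈ LinearMap.ker (laplacian d p) := by
  rw [LinearMap.mem_ker, laplacian]
  simp only [LinearMap.add_apply, LinearMap.comp_apply, h2, map_zero]
  erw [h1, map_zero, add_zero]


end Aux

/-- **Hodge decomposition.** For a chain complex `(C, d)` of
finite-dimensional inner product spaces over `ℝ` or `ℂ` (indexed by `ℕ`, with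
`d n : C n →ₗ C (n-1)` and `d 0 = 0`), each `C p` decomposes orthogonally as
`C p = ker Δ_p ⊕ Im d_{p+1} ⊕ Im d_p^*`, where
`Δ_p = d_{p+1} ∘ d_{p+1}^* + d_p^* ∘ d_p`. -/
theorem statement5 {𝕜 : Type} [RCLike 𝕜] {C : ℕ → Type}
    [∀ n, NormedAddCommGroup (C n)] [∀ n, InnerProductSpace 𝕜 (C n)]
    [∀ n, FiniteDimensional 𝕜 (C n)]
    (d : ∀ n : ℕ, C n →ₗ[𝕜] C (n - 1))
    (hd0 : d 0 = 0)
    (hd : ∀ n : ℕ, (d n).comp (d (n + 1)) = 0) (p : ℕ) :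
    (LinearMap.ker (laplacian d p) ⊔
        (LinearMap.range (d (p + 1)) : Submodule 𝕜 (C p)) ⊔
        LinearMap.range (adjoint (d p)) = ⊤) ∧
    (∀ x ∈ LinearMap.ker (laplacian d p),
      ∀ y ∈ (LinearMap.range (d (p + 1)) : Submodule 𝕜 (C p)),
        (inner 𝕜 x y : 𝕜) = 0) ∧
    (∀ x ∈ LinearMap.ker (laplacian d p),
      ∀ y ∈ LinearMap.range (adjoint (d p)), (inner 𝕜 x y : 𝕜) = 0) ∧
    (∀ x ∈ (LinearMap.range (d (p + 1)) : Submodule 𝕜 (C p)),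
      ∀ y ∈ LinearMap.range (adjoint (d p)), (inner 𝕜 x y : 𝕜) = 0) := by
  refine ⟨?_, ?_, ?_, ?_⟩
  · have hortho : (LinearMap.range (laplacian d p))ᗮ ≤ LinearMap.ker (laplacian d p) := by
      intro x hx
      have h0 : (inner 𝕜 ((laplacian d p) x) x : 𝕜) = 0 :=
        hx _ (LinearMap.mem_range_self _ x)
      obtain ⟨h1, h2⟩ := lap_inner_zero d p h0
      exact ker_lap_of_parts d p h1 h2
    have hrange : LinearMap.range (laplacian d p) ≤
        (LinearMap.range (d (p + 1)) : Submodule 𝕜 (C p)) ⊔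
          LinearMap.range (adjoint (d p)) := by
      rintro y ⟨x, rfl⟩
      exact Submodule.add_mem_sup (LinearMap.mem_range_self _ _)
        (LinearMap.mem_range_self _ _)
    rw [eq_top_iff, ← Submodule.sup_orthogonal_of_hasOrthogonalProjection
      (K := LinearMap.range (laplacian d p)), sup_assoc]
    exact sup_le (le_trans hrange le_sup_right) (le_trans hortho le_sup_left)
  · rintro x hx y ⟨a, rfl⟩
    obtain ⟨h1, -⟩ := mem_ker_lap d p hx
    calc (inner 𝕜 x ((d (p + 1)) a) : 𝕜)
        = inner 𝕜 ((adjoint (d (p + 1))) x) a := (adjoint_inner_left _ _ _).symm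
      _ = 0 := by erw [h1]; simp
  · rintro x hx y ⟨b, rfl⟩
    obtain ⟨-, h2⟩ := mem_ker_lap d p hx
    rw [adjoint_inner_right, h2, inner_zero_left]
  · rintro x ⟨a, rfl⟩ y ⟨b, rfl⟩
    rw [adjoint_inner_right]
    have h3 : (d p) ((d (p + 1)) a) = 0 := DFunLike.congr_fun (hd p) a
    erw [h3, inner_zero_left]
end

section
/- Let G be a hypergraph with essential graph Ḡ, and consider the first chain group of the hypergraph path complex over a field, spanned by directed pairs (v_0,v_1) for edges {v_0,v_1} of Ḡ. Then ker(d_1) decomposes as ker(d_1|_{W_1}) ⊕ ker(d_1|_{W_2}), where W_1 is spanned by the sums e + e' of dual directed edges and W_2 by one directed edge per undirected edge, and dim ker(d_1) = |E_Ḡ| + (|E_Ḡ| − |V_G| + |C_Ḡ|) = 2|E_Ḡ| − |V_G| + |C_Ḡ|. -/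
/-- The boundary map `d_1` sending a directed edge `(v₀, v₁)` to `(v₁) - (v₀)` on the
vector space over the field `k` spanned by directed edges. -/
noncomputable def edgeBoundary (k V : Type) [Field k] : ((V × V) →₀ k) →ₗ[k] (V →₀ k) :=
  (Finsupp.lift (V →₀ k) k (V × V))
    (fun e => Finsupp.single e.2 (1 : k) - Finsupp.single e.1 (1 : k))

open Finsupp Submodule

section aux
variable {k V : Type} [Field k]

lemma edgeBoundary_single (p : V × V) (c : k) :
    edgeBoundary k V (Finsupp.single p c) = Finsupp.single p.2 c - Finsupp.single p.1 c := by
  classical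
  simp [edgeBoundary, Finsupp.lift_apply, Finsupp.sum_single_index, smul_sub, Finsupp.smul_single]

lemma linearIndependent_single_one' : LinearIndependent k (fun p : V × V => Finsupp.single p (1:k)) := by
  have := (Finsupp.basisSingleOne (ι := V × V) (R := k)).linearIndependent
  rwa [Finsupp.coe_basisSingleOne] at this

lemma finrank_span_singles (s : Finset (V × V)) :
    Module.finrank k (span k ((fun p : V × V => Finsupp.single p (1:k)) '' ↑s)) = s.card := by
  classical
  have hb : LinearIndependent k fun p : ↥(↑s : Set (V × V)) => Finsupp.single (p : V × V) (1:k) :=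
    linearIndependent_single_one'.comp _ Subtype.coe_injective
  have := finrank_span_eq_card hb
  have hset : (fun p : V × V => Finsupp.single p (1:k)) '' ↑s
      = Set.range (fun p : ↥(↑s : Set (V × V)) => Finsupp.single (p : V × V) (1:k)) :=
    Set.image_eq_range _ _
  rw [hset, this]
  simp

end aux

section graph
variable {k V : Type} [Field k] {G : SimpleGraph V}

/-- Span of the elementary boundaries of edges. -/
noncomputable def diffSpan (k : Type) [Field k] {V : Type} (G : SimpleGraph V) :
    Submodule k (V →₀ k) :=
  span k {f | ∃ v w : V, G.Adj v w ∧ f = Finsupp.single w (1:k) - Finsupp.single v (1:k)}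

lemma reachable_diff_mem {v w : V} (h : G.Reachable v w) :
    Finsupp.single w (1:k) - Finsupp.single v (1:k) ∈ diffSpan k G := by
  obtain ⟨p⟩ := h
  induction p with
  | nil => simp
  | @cons v u w h q ih =>
    have h2 : Finsupp.single u (1:k) - Finsupp.single v (1:k) ∈ diffSpan k G :=
      subset_span ⟨v, u, h, rfl⟩
    have := add_mem ih h2
    simpa [sub_add_sub_cancel] using this

lemma mk_out_eq (c : G.ConnectedComponent) : G.connectedComponentMk c.out = c :=
  Quot.out_eq c

lemma diffSpan_eq_ker :
    diffSpan k G = LinearMap.ker (Finsupp.lmapDomain k k G.connectedComponentMk) := by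
  apply le_antisymm
  · rw [diffSpan, span_le]
    rintro f ⟨v, w, hvw, rfl⟩
    simp only [SetLike.mem_coe, LinearMap.mem_ker, map_sub, Finsupp.lmapDomain_apply,
      Finsupp.mapDomain_single]
    rw [SimpleGraph.ConnectedComponent.connectedComponentMk_eq_of_adj hvw, sub_self]
  · intro f hf
    have key : ∀ g : V →₀ k,
        g - Finsupp.mapDomain (fun v => (G.connectedComponentMk v).out) g ∈ diffSpan k G := by
      intro g
      induction g using Finsupp.induction_linear with
      | zero => simp
      | add f g hf hg =>
        rw [Finsupp.mapDomain_add]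
        have := add_mem hf hg
        convert this using 1
        abel
      | single a b =>
        rw [Finsupp.mapDomain_single]
        have hr : G.Reachable ((G.connectedComponentMk a).out) a :=
          SimpleGraph.ConnectedComponent.exact (mk_out_eq _)
        have h2 : Finsupp.single a b - Finsupp.single ((G.connectedComponentMk a).out) b
            = b • (Finsupp.single a (1:k) - Finsupp.single ((G.connectedComponentMk a).out) (1:k)) := by
          simp [smul_sub, Finsupp.smul_single]
        rw [h2]
        exact Submodule.smul_mem _ _ (reachable_diff_mem hr)
    have h0 : Finsupp.mapDomain (fun v => (G.connectedComponentMk v).out) f = 0 := by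
      have hcomp : (fun v => (G.connectedComponentMk v).out)
          = (fun c : G.ConnectedComponent => c.out) ∘ G.connectedComponentMk := rfl
      rw [hcomp, Finsupp.mapDomain_comp]
      have : Finsupp.mapDomain G.connectedComponentMk f = 0 := by
        simpa [Finsupp.lmapDomain_apply] using hf
      rw [this, Finsupp.mapDomain_zero]
    simpa [h0] using key f

lemma lmapDomain_mk_surjective :
    Function.Surjective
      (Finsupp.lmapDomain k k G.connectedComponentMk :
        (V →₀ k) →ₗ[k] (G.ConnectedComponent →₀ k)) := by
  intro x
  refine ⟨Finsupp.mapDomain (fun c : G.ConnectedComponent => c.out) x, ?_⟩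
  rw [Finsupp.lmapDomain_apply, ← Finsupp.mapDomain_comp]
  have : G.connectedComponentMk ∘ (fun c : G.ConnectedComponent => c.out) = id :=
    funext fun c => mk_out_eq c
  rw [this, Finsupp.mapDomain_id]

lemma finrank_diffSpan [Fintype V] [DecidableEq V] [DecidableRel G.Adj] :
    Module.finrank k (diffSpan k G) + Fintype.card G.ConnectedComponent = Fintype.card V := by
  have h := LinearMap.finrank_range_add_finrank_ker
    (Finsupp.lmapDomain k k G.connectedComponentMk :
      (V →₀ k) →ₗ[k] (G.ConnectedComponent →₀ k))
  rw [LinearMap.range_eq_top.2 lmapDomain_mk_surjective, finrank_top,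
    Module.finrank_finsupp_self, Module.finrank_finsupp_self, ← diffSpan_eq_ker] at h
  omega

end graph

lemma finrank_map_add_finrank_inf_ker {k M N : Type} [Field k] [AddCommGroup M] [Module k M]
    [AddCommGroup N] [Module k N] [FiniteDimensional k M]
    (f : M →ₗ[k] N) (p : Submodule k M) :
    Module.finrank k ↥(Submodule.map f p) + Module.finrank k ↥(p ⊓ LinearMap.ker f)
      = Module.finrank k ↥p := by
  have hRN := LinearMap.finrank_range_add_finrank_ker (f.domRestrict p)
  rw [LinearMap.range_domRestrict] at hRN
  have h1 : LinearMap.ker (f.domRestrict p)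
      = Submodule.comap p.subtype (LinearMap.ker f) := LinearMap.ker_comp _ _
  rw [h1] at hRN
  have h2 := (Submodule.equivSubtypeMap p
    (Submodule.comap p.subtype (LinearMap.ker f))).finrank_eq
  rw [Submodule.map_comap_subtype] at h2
  rw [h2] at hRN
  exact hRN


set_option maxHeartbeats 1000000 in
set_option synthInstance.maxHeartbeats 400000 in
/-- Let `G` be a finite hypergraph (hyperedge set `E`) with essential
graph `Ḡ` (vertices adjacent iff distinct and contained in a common hyperedge).
Consider the first chain group of the hypergraph path complex over a field `k`,
spanned by the directed pairs `(v₀, v₁)` for edges `{v₀, v₁}` of `Ḡ`.  Then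
`ker d₁` decomposes as `ker (d₁|_{W₁}) ⊕ ker (d₁|_{W₂})`, where `W₁` is spanned by
the sums `e + e'` of dual directed edges and `W₂` by one directed edge per
undirected edge, and `dim ker d₁ = 2|E_Ḡ| - |V| + |C_Ḡ|`. -/
theorem statement15 (k V : Type) [Field k] [Fintype V] [DecidableEq V]
    [LinearOrder V] (E : Finset (Finset V))
    (G : SimpleGraph V) [DecidableRel G.Adj] [Fintype G.edgeSet]
    (hG : ∀ v w : V, G.Adj v w ↔ v ≠ w ∧ ∃ e ∈ E, v ∈ e ∧ w ∈ e) :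
    -- the relevant subspaces
    (let Wfull : Submodule k ((V × V) →₀ k) := Submodule.span k
        {f | ∃ v w : V, G.Adj v w ∧ f = Finsupp.single (v, w) (1 : k)};
     let W1 : Submodule k ((V × V) →₀ k) := Submodule.span k
        {f | ∃ v w : V, G.Adj v w ∧
          f = Finsupp.single (v, w) (1 : k) + Finsupp.single (w, v) (1 : k)};
     let W2 : Submodule k ((V × V) →₀ k) := Submodule.span k
        {f | ∃ v w : V, G.Adj v w ∧ v < w ∧ f = Finsupp.single (v, w) (1 : k)};
     -- kernel of d₁ restricted to the span of directed edges decomposes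
     (Wfull ⊓ LinearMap.ker (edgeBoundary k V)
        = (W1 ⊓ LinearMap.ker (edgeBoundary k V)) ⊔ (W2 ⊓ LinearMap.ker (edgeBoundary k V))) ∧
     Disjoint (W1 ⊓ LinearMap.ker (edgeBoundary k V)) (W2 ⊓ LinearMap.ker (edgeBoundary k V)) ∧
     -- dimension count: dim ker d₁ = |E_Ḡ| + (|E_Ḡ| - |V| + |C_Ḡ|) = 2|E_Ḡ| - |V| + |C_Ḡ|
     (Module.finrank k ↥(Wfull ⊓ LinearMap.ker (edgeBoundary k V)) : ℤ)
        = 2 * (G.edgeFinset.card : ℤ) - Fintype.card V + Nat.card G.ConnectedComponent) := by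
  classical
  intro Wfull W1 W2
  have hW1full : W1 ≤ Wfull := by
    refine Submodule.span_le.2 ?_
    rintro f ⟨v, w, hvw, rfl⟩
    exact add_mem (Submodule.subset_span ⟨v, w, hvw, rfl⟩)
      (Submodule.subset_span ⟨w, v, hvw.symm, rfl⟩)
  have hW2full : W2 ≤ Wfull := by
    refine Submodule.span_le.2 ?_
    rintro f ⟨v, w, hvw, _, rfl⟩
    exact Submodule.subset_span ⟨v, w, hvw, rfl⟩
  have hW1ker : W1 ≤ LinearMap.ker (edgeBoundary k V) := by
    refine Submodule.span_le.2 ?_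
    rintro f ⟨v, w, hvw, rfl⟩
    simp only [SetLike.mem_coe, LinearMap.mem_ker, map_add, edgeBoundary_single]
    abel
  have hfull12 : Wfull ≤ W1 ⊔ W2 := by
    refine Submodule.span_le.2 ?_
    rintro f ⟨v, w, hvw, rfl⟩
    rcases lt_trichotomy v w with h | h | h
    · exact Submodule.mem_sup_right (Submodule.subset_span ⟨v, w, hvw, h, rfl⟩)
    · exact absurd h hvw.ne
    · have h1 : Finsupp.single (v, w) (1:k) + Finsupp.single (w, v) (1:k) ∈ W1 :=
        Submodule.subset_span ⟨v, w, hvw, rfl⟩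
      have h2 : Finsupp.single (w, v) (1:k) ∈ W2 :=
        Submodule.subset_span ⟨w, v, hvw.symm, h, rfl⟩
      have := sub_mem (Submodule.mem_sup_left h1) (Submodule.mem_sup_right h2)
      simpa using this
  refine ⟨?_, ?_, ?_⟩
  · -- decomposition
    apply le_antisymm
    · intro x hx
      obtain ⟨hxF, hxK⟩ := Submodule.mem_inf.1 hx
      obtain ⟨y, hy, z, hz, rfl⟩ := Submodule.mem_sup.1 (hfull12 hxF)
      have hyK : y ∈ LinearMap.ker (edgeBoundary k V) := hW1ker hy
      have hzK : z ∈ LinearMap.ker (edgeBoundary k V) := by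
        rw [LinearMap.mem_ker] at hyK hxK ⊢
        rw [map_add, hyK, zero_add] at hxK
        exact hxK
      exact Submodule.mem_sup.2 ⟨y, Submodule.mem_inf.2 ⟨hy, hyK⟩,
        z, Submodule.mem_inf.2 ⟨hz, hzK⟩, rfl⟩
    · exact sup_le (inf_le_inf_right _ hW1full) (inf_le_inf_right _ hW2full)
  · -- disjointness
    refine Disjoint.mono inf_le_left inf_le_left ?_
    rw [Submodule.disjoint_def]
    intro x hx1 hx2
    have hsupp : ∀ q : V × V, ¬ q.1 < q.2 → x q = 0 := by
      have hle : W2 ≤ Finsupp.supported k k {q : V × V | q.1 < q.2} := by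
        refine Submodule.span_le.2 ?_
        rintro f ⟨v, w, hvw, hlt, rfl⟩
        exact Finsupp.single_mem_supported k 1 hlt
      exact fun q hq => (Finsupp.mem_supported' k x).1 (hle hx2) q hq
    have hswap : Finsupp.mapDomain Prod.swap x = x := by
      have hfix : W1 ≤ LinearMap.ker
          (Finsupp.lmapDomain k k (Prod.swap : V × V → V × V) - LinearMap.id) := by
        refine Submodule.span_le.2 ?_
        rintro f ⟨v, w, hvw, rfl⟩
        simp only [SetLike.mem_coe, LinearMap.mem_ker, LinearMap.sub_apply, LinearMap.id_apply,
          Finsupp.lmapDomain_apply, Finsupp.mapDomain_add, Finsupp.mapDomain_single]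
        simp only [Prod.swap_prod_mk]
        abel
      have hx := hfix hx1
      rw [LinearMap.mem_ker, LinearMap.sub_apply, LinearMap.id_apply, sub_eq_zero,
        Finsupp.lmapDomain_apply] at hx
      exact hx
    ext q
    simp only [Finsupp.coe_zero, Pi.zero_apply]
    by_cases h : q.1 < q.2
    · have hq : Finsupp.mapDomain Prod.swap x (Prod.swap (q.2, q.1)) = x (q.2, q.1) :=
        Finsupp.mapDomain_apply Prod.swap_injective x (q.2, q.1)
      rw [hswap] at hq
      have hq' : x q = x (q.2, q.1) := by
        rw [← hq]
        congr 1
      rw [hq']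
      exact hsupp (q.2, q.1) (by simpa using le_of_lt h)
    · exact hsupp q h
  · -- dimension
    set Sfull : Finset (V × V) := Finset.univ.filter (fun p => G.Adj p.1 p.2) with hS
    have hsetfull : {f | ∃ v w : V, G.Adj v w ∧ f = Finsupp.single (v, w) (1 : k)}
        = (fun p : V × V => Finsupp.single p (1:k)) '' ↑Sfull := by
      ext f
      constructor
      · rintro ⟨v, w, h, rfl⟩
        exact ⟨(v, w), by simp [hS, h], rfl⟩
      · rintro ⟨p, hp, rfl⟩
        simp only [hS, Finset.coe_filter, Finset.mem_univ, true_and, Set.mem_setOf_eq] at hp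
        exact ⟨p.1, p.2, hp, by simp⟩
    have hWfull_span : Wfull = span k ((fun p : V × V => Finsupp.single p (1:k)) '' ↑Sfull) := by
      show span k _ = _
      rw [hsetfull]
    have hcard : Sfull.card = 2 * G.edgeFinset.card := by
      have h2 := SimpleGraph.two_mul_card_edgeFinset (G := G)
      rw [hS]
      have hfe : (Finset.univ.filter fun p : V × V => G.Adj p.1 p.2)
          = (Finset.univ.filter fun (x, y) => G.Adj x y) := by
        ext ⟨a, b⟩; simp
      rw [hfe, ← h2]
      congr 1
      simp only [SimpleGraph.edgeFinset_card]
      congr 1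
      exact Subsingleton.elim _ _
    have hrankWfull : Module.finrank k Wfull = 2 * G.edgeFinset.card := by
      rw [hWfull_span, finrank_span_singles, hcard]
    have hmap : Submodule.map (edgeBoundary k V) Wfull = diffSpan k G := by
      rw [hWfull_span, Submodule.map_span, diffSpan]
      congr 1
      ext g
      constructor
      · rintro ⟨f, ⟨p, hp, rfl⟩, rfl⟩
        simp only [hS, Finset.coe_filter, Finset.mem_univ, true_and, Set.mem_setOf_eq] at hp
        exact ⟨p.1, p.2, hp, by rw [edgeBoundary_single]⟩
      · rintro ⟨v, w, h, rfl⟩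
        exact ⟨Finsupp.single (v, w) 1, ⟨(v, w), by simp [hS, h], rfl⟩,
          by rw [edgeBoundary_single]⟩
    haveI hfd : Module.Finite k ((V × V) →₀ k) :=
      Module.Finite.equiv (Finsupp.linearEquivFunOnFinite k k (V × V)).symm
    have hRN := finrank_map_add_finrank_inf_ker (edgeBoundary k V) Wfull
    rw [hmap, hrankWfull] at hRN
    have hD := finrank_diffSpan (k := k) (G := G)
    rw [Nat.card_eq_fintype_card]
    omega
end

section
/- For a finite hypergraph G over a field k, the first path homology of the hypergraph complex satisfies dim H_1 = 2|E_Ḡ| − |V_G| + |C_Ḡ| − rank(d_2), and consequently dim H_1 ≤ 2|E_Ḡ| − |V_G| + |C_Ḡ|. -/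
set_option maxSynthPendingDepth 3

/-- The boundary map `d_2` sending `(v₀, v₁, v₂)` to
`(v₁, v₂) - (v₀, v₂) + (v₀, v₁)`. -/
noncomputable def triangleBoundary (k V : Type) [Field k] :
    ((V × V × V) →₀ k) →ₗ[k] ((V × V) →₀ k) :=
  (Finsupp.lift ((V × V) →₀ k) k (V × V × V))
    (fun t => Finsupp.single (t.2.1, t.2.2) (1 : k)
      - Finsupp.single (t.1, t.2.2) (1 : k) + Finsupp.single (t.1, t.2.1) (1 : k))

lemma d1_single (k V : Type) [Field k] (p : V × V) (c : k) :
    edgeBoundary k V (Finsupp.single p c)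
      = c • (Finsupp.single p.2 (1:k) - Finsupp.single p.1 (1:k)) := by
  simp [edgeBoundary, Finsupp.lift_apply, Finsupp.sum_single_index]

lemma d2_single (k V : Type) [Field k] (t : V × V × V) (c : k) :
    triangleBoundary k V (Finsupp.single t c)
      = c • (Finsupp.single (t.2.1, t.2.2) (1:k)
          - Finsupp.single (t.1, t.2.2) (1:k) + Finsupp.single (t.1, t.2.1) (1:k)) := by
  simp [triangleBoundary, Finsupp.lift_apply, Finsupp.sum_single_index]

lemma d1_comp_d2 (k V : Type) [Field k] :
    (edgeBoundary k V).comp (triangleBoundary k V) = 0 := by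
  apply Finsupp.lhom_ext
  intro t c
  simp only [LinearMap.comp_apply, LinearMap.zero_apply, d2_single, map_smul, map_add, map_sub,
    d1_single]
  module

/-- The degree-one component of the hypergraph (path) complex of a graph `G`:
the span of the directed edges of `G`. -/
noncomputable def omega1 (k : Type) {V : Type} [Field k] (G : SimpleGraph V) :
    Submodule k ((V × V) →₀ k) :=
  Submodule.span k {f | ∃ v w : V, G.Adj v w ∧ f = Finsupp.single (v, w) (1 : k)}

section Main
variable (k : Type) {V : Type} [Field k] (G : SimpleGraph V)

lemma omega1_eq_supported :
    omega1 k G = Finsupp.supported k k {p : V × V | G.Adj p.1 p.2} := by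
  rw [Finsupp.supported_eq_span_single, omega1]
  congr 1
  ext f
  constructor
  · rintro ⟨v, w, hadj, rfl⟩
    exact ⟨(v, w), hadj, rfl⟩
  · rintro ⟨⟨v, w⟩, hadj, rfl⟩
    exact ⟨v, w, hadj, rfl⟩

lemma single_mem_omega1 {v w : V} (h : G.Adj v w) :
    Finsupp.single (v, w) (1:k) ∈ omega1 k G :=
  Submodule.subset_span ⟨v, w, h, rfl⟩

/-- difference of reachable vertices lies in the image of d1 on omega1 -/
lemma diff_mem_map_d1 {u v : V} (h : G.Reachable u v) :
    Finsupp.single v (1:k) - Finsupp.single u (1:k) ∈ (omega1 k G).map (edgeBoundary k V) := by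
  obtain ⟨w⟩ := h
  induction w with
  | nil => simp
  | @cons a b c hab p ih =>
      have h1 : Finsupp.single b (1:k) - Finsupp.single a (1:k)
          ∈ (omega1 k G).map (edgeBoundary k V) := by
        refine ⟨Finsupp.single (a, b) (1:k), single_mem_omega1 k G hab, ?_⟩
        simp [d1_single]
      have := Submodule.add_mem _ ih h1
      simpa using this

noncomputable abbrev piC : (V →₀ k) →ₗ[k] (G.ConnectedComponent →₀ k) :=
  Finsupp.lmapDomain k k G.connectedComponentMk

lemma map_d1_eq_ker_pi :
    (omega1 k G).map (edgeBoundary k V) = LinearMap.ker (piC k G) := by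
  apply le_antisymm
  · rw [omega1, Submodule.map_span, Submodule.span_le]
    rintro _ ⟨f, ⟨v, w, hadj, rfl⟩, rfl⟩
    simp only [SetLike.mem_coe, LinearMap.mem_ker, d1_single, map_smul, map_sub,
      Finsupp.lmapDomain_apply, Finsupp.mapDomain_single]
    have : G.connectedComponentMk w = G.connectedComponentMk v :=
      (SimpleGraph.ConnectedComponent.eq).2 hadj.symm.reachable
    rw [this]
    simp
  · intro f hf
    simp only [LinearMap.mem_ker, Finsupp.lmapDomain_apply] at hf
    have key : ∀ g : V →₀ k,
        g - Finsupp.mapDomain (fun v => (G.connectedComponentMk v).out) g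
          ∈ (omega1 k G).map (edgeBoundary k V) := by
      intro g
      induction g using Finsupp.induction_linear with
      | zero => simp
      | add a b ha hb =>
          rw [Finsupp.mapDomain_add]
          have := Submodule.add_mem _ ha hb
          convert this using 1
          abel
      | single a b =>
          rw [Finsupp.mapDomain_single]
          have hr : G.Reachable (G.connectedComponentMk a).out a := by
            rw [← SimpleGraph.ConnectedComponent.eq]
            exact (G.connectedComponentMk a).out_eq
          have := Submodule.smul_mem _ b (diff_mem_map_d1 k G hr)
          convert this using 1
          simp [smul_sub, Finsupp.smul_single]
    have h2 : Finsupp.mapDomain (fun v => (G.connectedComponentMk v).out) f = 0 := by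
      have : (fun v => (G.connectedComponentMk v).out)
          = (fun c : G.ConnectedComponent => c.out) ∘ G.connectedComponentMk := rfl
      rw [this, Finsupp.mapDomain_comp, hf, Finsupp.mapDomain_zero]
    have := key f
    rwa [h2, sub_zero] at this

lemma pi_surjective : LinearMap.range (piC k G) = ⊤ := by
  rw [eq_top_iff]
  rintro g -
  induction g using Finsupp.induction_linear with
  | zero => exact Submodule.zero_mem _
  | add a b ha hb => exact Submodule.add_mem _ ha hb
  | single c b =>
      refine ⟨Finsupp.single c.out b, ?_⟩
      simp only [Finsupp.lmapDomain_apply, Finsupp.mapDomain_single]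
      rw [show G.connectedComponentMk c.out = c from c.out_eq]

end Main

/-- The degree-two component of the hypergraph (path) complex of a graph `G`:
the `∂`-invariant part of the span of anchor sequences of length two. -/
noncomputable def omega2 (k : Type) {V : Type} [Field k] (G : SimpleGraph V) :
    Submodule k ((V × V × V) →₀ k) :=
  (Submodule.span k {f | ∃ u v w : V, G.Adj u v ∧ G.Adj v w ∧
      f = Finsupp.single (u, v, w) (1 : k)})
    ⊓ Submodule.comap (triangleBoundary k V) (omega1 k G)

/-- The first homology `H₁ = ker d₁ / Im d₂` of the hypergraph (path) complex. -/
noncomputable def pathH1 (k : Type) {V : Type} [Field k] (G : SimpleGraph V) : Type :=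
  ↥(omega1 k G ⊓ LinearMap.ker (edgeBoundary k V)) ⧸
    (((omega2 k G).map (triangleBoundary k V)).comap
      (omega1 k G ⊓ LinearMap.ker (edgeBoundary k V)).subtype)

noncomputable instance (k : Type) {V : Type} [Field k] (G : SimpleGraph V) :
    AddCommGroup (pathH1 k G) := inferInstanceAs (AddCommGroup (_ ⧸ _))

noncomputable instance (k : Type) {V : Type} [Field k] (G : SimpleGraph V) :
    Module k (pathH1 k G) := inferInstanceAs (Module k (_ ⧸ _))

lemma im_d2_le (k : Type) {V : Type} [Field k] (G : SimpleGraph V) :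
    (omega2 k G).map (triangleBoundary k V)
      ≤ omega1 k G ⊓ LinearMap.ker (edgeBoundary k V) := by
  rintro x ⟨y, ⟨hy1, hy2⟩, rfl⟩
  refine ⟨hy2, ?_⟩
  have : edgeBoundary k V (triangleBoundary k V y) = 0 := by
    rw [← LinearMap.comp_apply, d1_comp_d2]; rfl
  exact this

set_option maxHeartbeats 1000000 in
/-- For a finite hypergraph (hyperedge set `E`) with essential graph
`G = Ḡ`, over a field `k`, the first path homology of the hypergraph complex
satisfies `dim H₁ = 2|E_Ḡ| - |V| + |C_Ḡ| - rank d₂`, and consequently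
`dim H₁ ≤ 2|E_Ḡ| - |V| + |C_Ḡ|`. -/
theorem statement16 (k V : Type) [Field k] [Fintype V] [DecidableEq V]
    (E : Finset (Finset V))
    (G : SimpleGraph V) [DecidableRel G.Adj] [Fintype G.edgeSet]
    (hG : ∀ v w : V, G.Adj v w ↔ v ≠ w ∧ ∃ e ∈ E, v ∈ e ∧ w ∈ e) :
    (Module.finrank k (pathH1 k G) : ℤ)
        = 2 * (G.edgeFinset.card : ℤ) - Fintype.card V + Nat.card G.ConnectedComponent
          - Module.finrank k ↥((omega2 k G).map (triangleBoundary k V)) ∧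
    (Module.finrank k (pathH1 k G) : ℤ)
        ≤ 2 * (G.edgeFinset.card : ℤ) - Fintype.card V
          + Nat.card G.ConnectedComponent := by
  classical
  set m : ℕ := G.edgeFinset.card
  set n : ℕ := Fintype.card V
  have hc : Nat.card G.ConnectedComponent = Fintype.card G.ConnectedComponent :=
    Nat.card_eq_fintype_card
  set c : ℕ := Fintype.card G.ConnectedComponent
  set b : ℕ := Module.finrank k ↥((omega2 k G).map (triangleBoundary k V))
  set a : ℕ := Module.finrank k ↥(omega1 k G ⊓ LinearMap.ker (edgeBoundary k V))
  set r : ℕ := Module.finrank k ↥(LinearMap.ker (piC k G))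
  -- Step A: finrank omega1 = 2 m
  have hS : Module.finrank k ↥(omega1 k G) = 2 * m := by
    rw [omega1_eq_supported]
    rw [LinearEquiv.finrank_eq (Finsupp.supportedEquivFinsupp _)]
    rw [Module.finrank_finsupp, Module.finrank_self, mul_one]
    have : Fintype.card ↑{p : V × V | G.Adj p.1 p.2} = Fintype.card G.Dart := by
      apply Fintype.card_congr
      exact ⟨fun x => ⟨x.1, x.2⟩, fun d => ⟨d.toProd, d.adj⟩,
        fun x => rfl, fun d => rfl⟩
    rw [this, SimpleGraph.dart_card_eq_twice_card_edges]
    congr 1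
    have e1 : ∀ (i : Fintype ↑G.edgeSet), (@SimpleGraph.edgeFinset V G i).card
        = Nat.card ↑G.edgeSet := fun i =>
      (@Set.toFinset_card _ G.edgeSet i).trans (@Nat.card_eq_fintype_card _ i).symm
    rw [e1]
    exact (e1 _).symm
  -- Step B: c + r = n
  have hB : c + r = n := by
    have h := LinearMap.finrank_range_add_finrank_ker (piC k G)
    rw [pi_surjective, finrank_top, Module.finrank_finsupp, Module.finrank_self, mul_one,
      Module.finrank_finsupp, Module.finrank_self, mul_one] at h
    exact h
  -- Step C: r + a = 2 m
  have hC : r + a = 2 * m := by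
    have h := LinearMap.finrank_range_add_finrank_ker
      ((edgeBoundary k V).domRestrict (omega1 k G))
    rw [hS] at h
    have h1 : LinearMap.range ((edgeBoundary k V).domRestrict (omega1 k G))
        = LinearMap.ker (piC k G) := by
      rw [LinearMap.range_domRestrict, map_d1_eq_ker_pi]
    have h2 : LinearMap.ker ((edgeBoundary k V).domRestrict (omega1 k G))
        = Submodule.comap (omega1 k G).subtype
            (omega1 k G ⊓ LinearMap.ker (edgeBoundary k V)) := by
      rw [LinearMap.ker_domRestrict, Submodule.comap_inf, Submodule.comap_subtype_self,
        top_inf_eq]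
    rw [h1, h2] at h
    rw [LinearEquiv.finrank_eq (Submodule.comapSubtypeEquivOfLe (inf_le_left : omega1 k G ⊓ LinearMap.ker (edgeBoundary k V) ≤ omega1 k G))] at h
    exact h
  -- Step D: finrank H1 + b = a
  have hD : Module.finrank k (pathH1 k G) + b = a := by
    have h := Submodule.finrank_quotient_add_finrank
      (((omega2 k G).map (triangleBoundary k V)).comap
        (omega1 k G ⊓ LinearMap.ker (edgeBoundary k V)).subtype)
    rw [LinearEquiv.finrank_eq (Submodule.comapSubtypeEquivOfLe (im_d2_le k G))] at h
    exact h
  rw [hc]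
  constructor
  · push_cast
    omega
  · push_cast
    omega
end

section
/- In the persistent setting induced by an embedding i_•: A_• → B_• of chain complexes with auxiliary complex C_n = (d_n^B)^{-1}(i_{n-1}(A_{n-1})), one has Im(d_{n+1}^A) ⊆ Im(d_{n+1}^{B,A}) ⊆ ker(d_n^A), and consequently the nullity of the persistent Laplacian satisfies η(Δ_n^{B,A}) ≤ η(Δ_n^A). -/
open LinearMap

/-- Let `i : A → B` be a degreewise injective chain map of chain
complexes of finite-dimensional inner product spaces over `ℝ` or `ℂ`, with auxiliary
complex `C n = (d_n^B)⁻¹ (i (A (n-1)))`, and let `d^{B,A}_{n+1} : C (n+1) → A n` be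
the restriction of `d_{n+1}^B` (characterized by `i n ∘ d^{B,A}_{n+1} = d^B_{n+1}`).
Then `Im d^A_{n+1} ⊆ Im d^{B,A}_{n+1} ⊆ ker d^A_n`, and the nullity of the persistent
Laplacian `Δ_n^{B,A} = (d_n^A)^* d_n^A + d^{B,A}_{n+1} (d^{B,A}_{n+1})^*` satisfies
`η(Δ_n^{B,A}) ≤ η(Δ_n^A)`. -/
theorem statement18 {𝕜 : Type} [RCLike 𝕜] {A B : ℕ → Type}
    [∀ n, NormedAddCommGroup (A n)] [∀ n, InnerProductSpace 𝕜 (A n)]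
    [∀ n, FiniteDimensional 𝕜 (A n)]
    [∀ n, NormedAddCommGroup (B n)] [∀ n, InnerProductSpace 𝕜 (B n)]
    [∀ n, FiniteDimensional 𝕜 (B n)]
    (dA : ∀ n : ℕ, A n →ₗ[𝕜] A (n - 1)) (dB : ∀ n : ℕ, B n →ₗ[𝕜] B (n - 1))
    (hdA0 : dA 0 = 0) (hdB0 : dB 0 = 0)
    (hdA : ∀ n, (dA n).comp (dA (n + 1)) = 0)
    (hdB : ∀ n, (dB n).comp (dB (n + 1)) = 0)
    (i : ∀ n : ℕ, A n →ₗ[𝕜] B n)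
    (hinj : ∀ n, Function.Injective (i n))
    (hcomm : ∀ n (a : A (n + 1)), dB (n + 1) (i (n + 1) a) = i n (dA (n + 1) a))
    (n : ℕ)
    (dBA : ↥(Submodule.comap (dB (n + 1)) (LinearMap.range (i n))) →ₗ[𝕜] A n)
    (hdBA : ∀ x : ↥(Submodule.comap (dB (n + 1)) (LinearMap.range (i n))),
      i n (dBA x) = dB (n + 1) (x : B (n + 1))) :
    ((LinearMap.range (dA (n + 1)) : Submodule 𝕜 (A n)) ≤ LinearMap.range dBA) ∧
    (LinearMap.range dBA ≤ LinearMap.ker (dA n)) ∧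
    (Module.finrank 𝕜
        ↥(LinearMap.ker (adjoint (dA n) ∘ₗ dA n + dBA ∘ₗ adjoint dBA))
      ≤ Module.finrank 𝕜
        ↥(LinearMap.ker (adjoint (dA n) ∘ₗ dA n
            + (dA (n + 1) ∘ₗ adjoint (dA (n + 1)) : A n →ₗ[𝕜] A n)))) := by
  have h1 : ((LinearMap.range (dA (n + 1)) : Submodule 𝕜 (A n)) ≤ LinearMap.range dBA) := by
    rintro _ ⟨a, rfl⟩
    have hmem : i (n + 1) a ∈ Submodule.comap (dB (n + 1)) (LinearMap.range (i n)) := by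
      exact ⟨dA (n + 1) a, (hcomm n a).symm⟩
    refine ⟨⟨i (n + 1) a, hmem⟩, ?_⟩
    apply hinj n
    rw [hdBA]
    exact hcomm n a
  have h2 : LinearMap.range dBA ≤ LinearMap.ker (dA n) := by
    rintro _ ⟨x, rfl⟩
    rw [LinearMap.mem_ker]
    cases n with
    | zero => rw [hdA0]; rfl
    | succ m =>
      apply hinj m
      rw [map_zero]
      calc i m (dA (m + 1) (dBA x)) = dB (m + 1) (i (m + 1) (dBA x)) := (hcomm m _).symm
        _ = dB (m + 1) (dB (m + 2) (x : B (m + 2))) := by rw [hdBA x]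
        _ = 0 := LinearMap.congr_fun (hdB (m + 1)) (x : B (m + 2))
  refine ⟨h1, h2, ?_⟩
  have h3 : LinearMap.ker (adjoint (dA n) ∘ₗ dA n + dBA ∘ₗ adjoint dBA)
      ≤ LinearMap.ker (adjoint (dA n) ∘ₗ dA n
          + (dA (n + 1) ∘ₗ adjoint (dA (n + 1)) : A n →ₗ[𝕜] A n)) := by
    intro x hx
    rw [LinearMap.mem_ker] at hx ⊢
    have hinner : (inner 𝕜 x ((adjoint (dA n) ∘ₗ dA n + dBA ∘ₗ adjoint dBA) x) : 𝕜) = 0 := by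
      rw [hx, inner_zero_right]
    have e1 : (inner 𝕜 x ((adjoint (dA n)) (dA n x)) : 𝕜) = inner 𝕜 (dA n x) (dA n x) :=
      LinearMap.adjoint_inner_right _ _ _
    have e2 : (inner 𝕜 x (dBA (adjoint dBA x)) : 𝕜)
        = inner 𝕜 (adjoint dBA x) (adjoint dBA x) :=
      (LinearMap.adjoint_inner_left _ _ _).symm
    have hsplit : (inner 𝕜 (dA n x) (dA n x) : 𝕜)
        + inner 𝕜 (adjoint dBA x) (adjoint dBA x) = 0 := by
      rw [← e1, ← e2, ← inner_add_right]
      exact hinner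
    rw [inner_self_eq_norm_sq_to_K, inner_self_eq_norm_sq_to_K] at hsplit
    have hre := congrArg RCLike.re hsplit
    simp only [map_add, map_zero, ← RCLike.ofReal_pow, RCLike.ofReal_re] at hre
    have hn1 : ‖dA n x‖ ^ 2 = 0 ∧ ‖adjoint dBA x‖ ^ 2 = 0 :=
      (add_eq_zero_iff_of_nonneg (by positivity) (by positivity)).mp hre
    have hAx : dA n x = 0 := by
      have := hn1.1; rwa [pow_eq_zero_iff (by norm_num), norm_eq_zero] at this
    have hTx : adjoint dBA x = 0 := by
      have := hn1.2; rwa [pow_eq_zero_iff (by norm_num), norm_eq_zero] at this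
    have hA1x : (adjoint (dA (n + 1)) : A n →ₗ[𝕜] A (n + 1)) x = 0 := by
      apply ext_inner_left 𝕜
      intro v
      rw [inner_zero_right, LinearMap.adjoint_inner_right]
      obtain ⟨w, hw⟩ := h1 ⟨v, rfl⟩
      exact (congrArg (fun y : A n => (inner 𝕜 y x : 𝕜)) hw.symm).trans
        ((LinearMap.adjoint_inner_right dBA w x).symm.trans
          (by rw [hTx, inner_zero_right]))
    rw [LinearMap.add_apply, LinearMap.comp_apply, LinearMap.comp_apply, hAx, map_zero,
      zero_add, hA1x, map_zero]
  exact Submodule.finrank_mono h3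
end
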